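/- Let A, B, C ∈ ℝ^{n×n} with C invertible. If σ_max(B) < σ_min(AC⁻¹), then for every F ∈ ℝ^{n×n} the new generalized absolute value matrix equation AX + B|CX| = F has exactly one solution X ∈ ℝ^{n×n}. -/

import Mathlib

open Matrix

/-- Componentwise absolute value of a real matrix. -/
noncomputable def matAbs {n : ℕ} (M : Matrix (Fin n) (Fin n) ℝ) : Matrix (Fin n) (Fin n) ℝ :=
  fun i j => |M i j|

/-- Largest singular value: the square root of the largest eigenvalue of MᵀM. -/
noncomputable def sigmaMax {n : ℕ} (M : Matrix (Fin n) (Fin n) ℝ) : ℝ :=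
  Real.sqrt (sSup (spectrum ℝ (Mᵀ * M)))

/-- Smallest singular value: the square root of the smallest eigenvalue of MᵀM. -/
noncomputable def sigmaMin {n : ℕ} (M : Matrix (Fin n) (Fin n) ℝ) : ℝ :=
  Real.sqrt (sInf (spectrum ℝ (Mᵀ * M)))

variable {n : ℕ}

/-- Quadratic form identity via the spectral theorem. -/
lemma quadform_exists {S : Matrix (Fin n) (Fin n) ℝ} (hS : S.IsHermitian) (x : Fin n → ℝ) :
    ∃ y : Fin n → ℝ, x ⬝ᵥ (S *ᵥ x) = ∑ i, hS.eigenvalues i * (y i)^2 ∧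
      x ⬝ᵥ x = ∑ i, (y i)^2 := by
  set U : Matrix (Fin n) (Fin n) ℝ := (hS.eigenvectorUnitary : Matrix (Fin n) (Fin n) ℝ) with hU
  have hstar : star U = Uᵀ := by
    rw [Matrix.star_eq_conjTranspose, Matrix.conjTranspose_eq_transpose_of_trivial]
  have hUU : U * Uᵀ = 1 := by
    rw [← hstar]; exact Matrix.mem_unitaryGroup_iff.mp hS.eigenvectorUnitary.2
  refine ⟨Uᵀ *ᵥ x, ?_, ?_⟩
  · conv_lhs => rw [hS.spectral_theorem, Unitary.conjStarAlgAut_apply, ← hU]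
    rw [hstar, RCLike.ofReal_real_eq_id]
    rw [← Matrix.mulVec_mulVec, ← Matrix.mulVec_mulVec, Matrix.dotProduct_mulVec,
      ← Matrix.mulVec_transpose]
    rw [dotProduct, Finset.sum_congr rfl]
    intro i _
    rw [Matrix.mulVec_diagonal]
    simp [Function.comp]
    ring
  · have : (Uᵀ *ᵥ x) ⬝ᵥ (Uᵀ *ᵥ x) = x ⬝ᵥ x := by
      rw [Matrix.dotProduct_mulVec, ← Matrix.mulVec_transpose, Matrix.mulVec_mulVec, Matrix.transpose_transpose, hUU,
        Matrix.one_mulVec]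
    rw [← this, dotProduct, Finset.sum_congr rfl]
    intro i _; ring

lemma quadform_le {S : Matrix (Fin n) (Fin n) ℝ} (hS : S.IsHermitian) {c : ℝ}
    (hc : ∀ i, hS.eigenvalues i ≤ c) (x : Fin n → ℝ) :
    x ⬝ᵥ (S *ᵥ x) ≤ c * (x ⬝ᵥ x) := by
  obtain ⟨y, h1, h2⟩ := quadform_exists hS x
  rw [h1, h2, Finset.mul_sum]
  exact Finset.sum_le_sum fun i _ => mul_le_mul_of_nonneg_right (hc i) (sq_nonneg _)

lemma le_quadform {S : Matrix (Fin n) (Fin n) ℝ} (hS : S.IsHermitian) {c : ℝ}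
    (hc : ∀ i, c ≤ hS.eigenvalues i) (x : Fin n → ℝ) :
    c * (x ⬝ᵥ x) ≤ x ⬝ᵥ (S *ᵥ x) := by
  obtain ⟨y, h1, h2⟩ := quadform_exists hS x
  rw [h1, h2, Finset.mul_sum]
  exact Finset.sum_le_sum fun i _ => mul_le_mul_of_nonneg_right (hc i) (sq_nonneg _)

lemma dot_self_pos {v : Fin n → ℝ} (hv : v ≠ 0) : 0 < v ⬝ᵥ v := by
  have h0 : 0 ≤ v ⬝ᵥ v := Finset.sum_nonneg fun i _ => mul_self_nonneg _
  rcases h0.lt_or_eq with h | h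
  · exact h
  · exact absurd ((dotProduct_self_eq_zero).mp h.symm) hv

/-- Every real spectrum element of a real square matrix has an eigenvector. -/
lemma spectrum_has_eigenvector {S : Matrix (Fin n) (Fin n) ℝ} {μ : ℝ}
    (hμ : μ ∈ spectrum ℝ S) : ∃ v : Fin n → ℝ, v ≠ 0 ∧ S *ᵥ v = μ • v := by
  rw [spectrum.mem_iff] at hμ
  have hdet : (algebraMap ℝ (Matrix (Fin n) (Fin n) ℝ) μ - S).det = 0 := by
    by_contra hd
    exact hμ ((Matrix.isUnit_iff_isUnit_det _).mpr (isUnit_iff_ne_zero.mpr hd))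
  obtain ⟨v, hv0, hv⟩ := (Matrix.exists_mulVec_eq_zero_iff).mpr hdet
  refine ⟨v, hv0, ?_⟩
  have : (algebraMap ℝ (Matrix (Fin n) (Fin n) ℝ) μ) *ᵥ v - S *ᵥ v = 0 := by
    rw [← Matrix.sub_mulVec, hv]
  have h2 : (algebraMap ℝ (Matrix (Fin n) (Fin n) ℝ) μ) *ᵥ v = μ • v := by
    rw [Algebra.algebraMap_eq_smul_one, Matrix.smul_mulVec, Matrix.one_mulVec]
  rw [h2] at this
  have := sub_eq_zero.mp this
  exact this.symm

lemma spectrum_bddAbove {S : Matrix (Fin n) (Fin n) ℝ} (hS : S.IsHermitian) (hn : 0 < n) :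
    BddAbove (spectrum ℝ S) := by
  have : Nonempty (Fin n) := ⟨⟨0, hn⟩⟩
  refine ⟨Finset.univ.sup' Finset.univ_nonempty hS.eigenvalues, fun μ hμ => ?_⟩
  obtain ⟨v, hv0, hv⟩ := spectrum_has_eigenvector hμ
  have h1 : v ⬝ᵥ (S *ᵥ v) = μ * (v ⬝ᵥ v) := by rw [hv, dotProduct_smul]; rfl
  have h2 := quadform_le hS (c := Finset.univ.sup' Finset.univ_nonempty hS.eigenvalues)
    (fun i => Finset.le_sup' _ (Finset.mem_univ i)) v
  rw [h1] at h2
  exact le_of_mul_le_mul_right (by linarith [h2]) (dot_self_pos hv0)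

lemma spectrum_nonneg {S : Matrix (Fin n) (Fin n) ℝ} (hS : S.PosSemidef) {μ : ℝ}
    (hμ : μ ∈ spectrum ℝ S) : 0 ≤ μ := by
  obtain ⟨v, hv0, hv⟩ := spectrum_has_eigenvector hμ
  have h1 : v ⬝ᵥ (S *ᵥ v) = μ * (v ⬝ᵥ v) := by rw [hv, dotProduct_smul]; rfl
  have h2 := hS.re_dotProduct_nonneg v
  simp only [RCLike.re_to_real, star_trivial] at h2
  rw [h1] at h2
  by_contra hneg
  push_neg at hneg
  nlinarith [dot_self_pos hv0]

lemma transpose_mul_self_posSemidef (B : Matrix (Fin n) (Fin n) ℝ) : (Bᵀ * B).PosSemidef := by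
  have := Matrix.posSemidef_conjTranspose_mul_self B
  rwa [Matrix.conjTranspose_eq_transpose_of_trivial] at this

lemma dot_mulVec_self (B : Matrix (Fin n) (Fin n) ℝ) (x : Fin n → ℝ) :
    x ⬝ᵥ ((Bᵀ * B) *ᵥ x) = (B *ᵥ x) ⬝ᵥ (B *ᵥ x) := by
  rw [← Matrix.mulVec_mulVec, Matrix.dotProduct_mulVec, Matrix.vecMul_transpose]

lemma sigmaMax_sq_bound (hn : 0 < n) (B : Matrix (Fin n) (Fin n) ℝ) (x : Fin n → ℝ) :
    (B *ᵥ x) ⬝ᵥ (B *ᵥ x) ≤ (sigmaMax B)^2 * (x ⬝ᵥ x) := by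
  have : Nonempty (Fin n) := ⟨⟨0, hn⟩⟩
  have hpsd := transpose_mul_self_posSemidef B
  have hub := spectrum_bddAbove hpsd.1 hn
  have hmem : ∀ i, hpsd.1.eigenvalues i ∈ spectrum ℝ (Bᵀ * B) :=
    fun i => hpsd.1.eigenvalues_mem_spectrum_real i
  have hnn : 0 ≤ sSup (spectrum ℝ (Bᵀ * B)) :=
    le_trans (hpsd.eigenvalues_nonneg ⟨0, hn⟩) (le_csSup hub (hmem _))
  have hsq : (sigmaMax B)^2 = sSup (spectrum ℝ (Bᵀ * B)) := Real.sq_sqrt hnn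
  rw [← dot_mulVec_self, hsq]
  exact quadform_le hpsd.1 (fun i => le_csSup hub (hmem i)) x

lemma sigmaMin_sq_bound (hn : 0 < n) (M : Matrix (Fin n) (Fin n) ℝ) (x : Fin n → ℝ) :
    (sigmaMin M)^2 * (x ⬝ᵥ x) ≤ (M *ᵥ x) ⬝ᵥ (M *ᵥ x) := by
  have : Nonempty (Fin n) := ⟨⟨0, hn⟩⟩
  have hpsd := transpose_mul_self_posSemidef M
  have hbb : BddBelow (spectrum ℝ (Mᵀ * M)) := ⟨0, fun μ hμ => spectrum_nonneg hpsd hμ⟩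
  have hmem : ∀ i, hpsd.1.eigenvalues i ∈ spectrum ℝ (Mᵀ * M) :=
    fun i => hpsd.1.eigenvalues_mem_spectrum_real i
  have hnn : 0 ≤ sInf (spectrum ℝ (Mᵀ * M)) :=
    le_csInf ⟨_, hmem ⟨0, hn⟩⟩ (fun μ hμ => spectrum_nonneg hpsd hμ)
  have hsq : (sigmaMin M)^2 = sInf (spectrum ℝ (Mᵀ * M)) := Real.sq_sqrt hnn
  rw [← dot_mulVec_self, hsq]
  exact le_quadform hpsd.1 (fun i => csInf_le hbb (hmem i)) x

/-- Embed a plain vector into Euclidean space. -/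
noncomputable def toE {n : ℕ} (v : Fin n → ℝ) : EuclideanSpace ℝ (Fin n) := WithLp.toLp 2 v

lemma enorm_sq_eq_dot (x : Fin n → ℝ) : ‖toE x‖^2 = x ⬝ᵥ x := by
  unfold toE
  rw [EuclideanSpace.norm_eq, Real.sq_sqrt (Finset.sum_nonneg fun i _ => sq_nonneg _)]
  exact Finset.sum_congr rfl fun i _ => by
    rw [Real.norm_eq_abs, sq_abs]; ring

lemma norm_mulVec_le (hn : 0 < n) (B : Matrix (Fin n) (Fin n) ℝ) (x : Fin n → ℝ) :
    ‖toE (B *ᵥ x)‖ ≤ sigmaMax B * ‖toE x‖ := by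
  have h := sigmaMax_sq_bound hn B x
  simp only [← enorm_sq_eq_dot] at h
  have h1 : (0:ℝ) ≤ sigmaMax B := Real.sqrt_nonneg _
  have h2 : ‖toE (B *ᵥ x)‖^2 ≤ (sigmaMax B * ‖toE x‖)^2 := by
    rw [mul_pow]; exact h
  have h3 := Real.sqrt_le_sqrt h2
  rwa [Real.sqrt_sq (norm_nonneg _), Real.sqrt_sq (mul_nonneg h1 (norm_nonneg _))] at h3

lemma norm_mulVec_ge (hn : 0 < n) (M : Matrix (Fin n) (Fin n) ℝ) (x : Fin n → ℝ) :
    sigmaMin M * ‖toE x‖ ≤ ‖toE (M *ᵥ x)‖ := by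
  have h := sigmaMin_sq_bound hn M x
  simp only [← enorm_sq_eq_dot] at h
  have h1 : (0:ℝ) ≤ sigmaMin M := Real.sqrt_nonneg _
  have h2 : (sigmaMin M * ‖toE x‖)^2 ≤ ‖toE (M *ᵥ x)‖^2 := by
    rw [mul_pow]; exact h
  have h3 := Real.sqrt_le_sqrt h2
  rwa [Real.sqrt_sq (norm_nonneg _), Real.sqrt_sq (mul_nonneg h1 (norm_nonneg _))] at h3

lemma norm_abs_sub_abs_le (y z : Fin n → ℝ) :
    ‖toE ((fun i => |y i|) - (fun i => |z i|))‖ ≤ ‖toE (y - z)‖ := by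
  unfold toE
  simp only [EuclideanSpace.norm_eq]
  apply Real.sqrt_le_sqrt
  apply Finset.sum_le_sum
  intro i _
  show ‖|y i| - |z i|‖^2 ≤ ‖y i - z i‖^2
  rw [Real.norm_eq_abs, Real.norm_eq_abs, sq_abs, sq_abs]
  have := abs_abs_sub_abs_le_abs_sub (y i) (z i)
  nlinarith [abs_nonneg (|y i| - |z i|), abs_nonneg (y i - z i), sq_abs (|y i| - |z i|), sq_abs (y i - z i)]

lemma isUnit_of_sigmaMin_pos (hn : 0 < n) {M : Matrix (Fin n) (Fin n) ℝ}
    (ha : 0 < sigmaMin M) : IsUnit M := by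
  by_contra hM
  have hdet : M.det = 0 := by
    by_contra hd
    exact hM ((Matrix.isUnit_iff_isUnit_det _).mpr (isUnit_iff_ne_zero.mpr hd))
  obtain ⟨v, hv0, hv⟩ := (Matrix.exists_mulVec_eq_zero_iff).mpr hdet
  have h1 := norm_mulVec_ge hn M v
  rw [hv] at h1
  have h2 : ‖toE (0 : Fin n → ℝ)‖ = 0 := norm_zero
  have h3 : 0 < ‖toE v‖ := by
    rw [norm_pos_iff]
    exact fun hc => hv0 (congrArg WithLp.ofLp hc)
  nlinarith

lemma vec_unique (hn : 0 < n) (Mm B : Matrix (Fin n) (Fin n) ℝ) (hM : IsUnit Mm)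
    (hb : sigmaMax B < sigmaMin Mm) (f : Fin n → ℝ) :
    ∃! y : Fin n → ℝ, Mm *ᵥ y + B *ᵥ (fun i => |y i|) = f := by
  set a := sigmaMin Mm with ha_def
  set b := sigmaMax B with hb_def
  have hb0 : (0:ℝ) ≤ b := Real.sqrt_nonneg _
  have ha : (0:ℝ) < a := lt_of_le_of_lt hb0 hb
  have hdet : IsUnit Mm.det := (Matrix.isUnit_iff_isUnit_det _).mp hM
  have hMM : Mm * Mm⁻¹ = 1 := Matrix.mul_nonsing_inv _ hdet
  have hMM' : Mm⁻¹ * Mm = 1 := Matrix.nonsing_inv_mul _ hdet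
  set g : EuclideanSpace ℝ (Fin n) → EuclideanSpace ℝ (Fin n) :=
    fun y => toE (Mm⁻¹ *ᵥ (f - B *ᵥ (fun i => |y i|))) with hg_def
  -- bound for Mm⁻¹
  have hinv : ∀ w : Fin n → ℝ, ‖toE (Mm⁻¹ *ᵥ w)‖ ≤ a⁻¹ * ‖toE w‖ := by
    intro w
    have h1 := norm_mulVec_ge hn Mm (Mm⁻¹ *ᵥ w)
    rw [Matrix.mulVec_mulVec, hMM, Matrix.one_mulVec] at h1
    rw [← le_div_iff₀' ha] at h1
    rw [div_eq_inv_mul] at h1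
    exact h1
  have hk1 : b / a < 1 := (div_lt_one ha).mpr hb
  set k : NNReal := ⟨b / a, div_nonneg hb0 ha.le⟩ with hk_def
  have hcontr : ContractingWith k g := by
    constructor
    · exact_mod_cast hk1
    · apply LipschitzWith.of_dist_le_mul
      intro y y'
      set d : Fin n → ℝ := (fun i => |y' i|) - (fun i => |y i|) with hd_def
      have hdiff : g y - g y' = toE (Mm⁻¹ *ᵥ (B *ᵥ d)) := by
        show WithLp.toLp 2 (Mm⁻¹ *ᵥ (f - B *ᵥ (fun i => |y i|))) - WithLp.toLp 2 (Mm⁻¹ *ᵥ (f - B *ᵥ (fun i => |y' i|)))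
          = WithLp.toLp 2 (Mm⁻¹ *ᵥ (B *ᵥ d))
        rw [← WithLp.toLp_sub]
        congr 1
        rw [← Matrix.mulVec_sub]
        rw [sub_sub_sub_cancel_left, ← Matrix.mulVec_sub]
      have c1 : dist (g y) (g y') = ‖toE (Mm⁻¹ *ᵥ (B *ᵥ d))‖ := by
        rw [dist_eq_norm, hdiff]
      have c2 : ‖toE (B *ᵥ d)‖ ≤ b * ‖toE d‖ := norm_mulVec_le hn B d
      have c3 : ‖toE d‖ ≤ ‖toE (y' - y)‖ := norm_abs_sub_abs_le y' y
      have c4 : ‖toE (y' - y)‖ = dist y y' := by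
        have : toE (y' - y).ofLp = y' - y := rfl
        rw [this, dist_eq_norm, norm_sub_rev]
      have c5 := hinv (B *ᵥ d)
      have hnn : (0:ℝ) ≤ ‖toE d‖ := norm_nonneg _
      have : dist (g y) (g y') ≤ a⁻¹ * (b * dist y y') := by
        rw [c1]
        calc ‖toE (Mm⁻¹ *ᵥ (B *ᵥ d))‖ ≤ a⁻¹ * ‖toE (B *ᵥ d)‖ := c5
          _ ≤ a⁻¹ * (b * ‖toE d‖) := by
              exact mul_le_mul_of_nonneg_left c2 (inv_nonneg.mpr ha.le)
          _ ≤ a⁻¹ * (b * dist y y') := by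
              apply mul_le_mul_of_nonneg_left _ (inv_nonneg.mpr ha.le)
              rw [← c4]
              exact mul_le_mul_of_nonneg_left c3 hb0
      calc dist (g y) (g y') ≤ a⁻¹ * (b * dist y y') := this
        _ = (k : ℝ) * dist y y' := by
            rw [hk_def]
            push_cast
            show a⁻¹ * (b * dist y y') = b / a * dist y y'
            ring
  have heq : ∀ y : Fin n → ℝ,
      g (toE y) = toE y ↔ Mm *ᵥ y + B *ᵥ (fun i => |y i|) = f := by
    intro y
    constructor
    · intro hg
      have h1 : Mm⁻¹ *ᵥ (f - B *ᵥ (fun i => |y i|)) = y := congrArg WithLp.ofLp hg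
      have h2 := congrArg (fun v => Mm *ᵥ v) h1
      simp only [Matrix.mulVec_mulVec] at h2
      rw [hMM, Matrix.one_mulVec] at h2
      rw [sub_eq_iff_eq_add] at h2
      exact h2.symm
    · intro he
      show WithLp.toLp 2 (Mm⁻¹ *ᵥ (f - B *ᵥ (fun i => |y i|))) = WithLp.toLp 2 y
      congr 1
      have h2 : f - B *ᵥ (fun i => |y i|) = Mm *ᵥ y := (sub_eq_iff_eq_add).mpr he.symm
      rw [h2, Matrix.mulVec_mulVec, hMM', Matrix.one_mulVec]
  obtain ⟨y₀, hy₀⟩ : ∃ y : EuclideanSpace ℝ (Fin n), g y = y :=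
    ⟨_, hcontr.fixedPoint_isFixedPt⟩
  refine ⟨y₀, (heq y₀).mp hy₀, ?_⟩
  intro y' hy'
  exact congrArg WithLp.ofLp (hcontr.fixedPoint_unique' ((heq y').mpr hy') hy₀)

theorem ngavme_unique_of_sigma {n : ℕ} (A B C : Matrix (Fin n) (Fin n) ℝ)
    (hC : IsUnit C) (h : sigmaMax B < sigmaMin (A * C⁻¹)) :
    ∀ F : Matrix (Fin n) (Fin n) ℝ,
      ∃! X : Matrix (Fin n) (Fin n) ℝ, A * X + B * matAbs (C * X) = F := by
  intro F
  rcases Nat.eq_zero_or_pos n with hn0 | hn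
  · subst hn0
    have htriv : ∀ P Q : Matrix (Fin 0) (Fin 0) ℝ, P = Q := fun P Q =>
      funext fun i => i.elim0
    exact ⟨0, htriv _ _, fun X _ => htriv _ _⟩
  · set Mm := A * C⁻¹ with hMm_def
    have hb0 : (0:ℝ) ≤ sigmaMax B := Real.sqrt_nonneg _
    have ha : 0 < sigmaMin Mm := lt_of_le_of_lt hb0 h
    have hMu : IsUnit Mm := isUnit_of_sigmaMin_pos hn ha
    have hCdet : IsUnit C.det := (Matrix.isUnit_iff_isUnit_det C).mp hC
    have hCC : C⁻¹ * C = 1 := Matrix.nonsing_inv_mul C hCdet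
    have hCC' : C * C⁻¹ = 1 := Matrix.mul_nonsing_inv C hCdet
    have hAM : ∀ x : Fin n → ℝ, Mm *ᵥ (C *ᵥ x) = A *ᵥ x := by
      intro x
      rw [Matrix.mulVec_mulVec, hMm_def, mul_assoc, hCC, mul_one]
    -- columnwise claim
    have hcols : ∀ j, ∃! x : Fin n → ℝ,
        A *ᵥ x + B *ᵥ (fun i => |(C *ᵥ x) i|) = fun i => F i j := by
      intro j
      obtain ⟨y0, hy0, hy0u⟩ := vec_unique hn Mm B hMu h (fun i => F i j)
      have hCy0 : C *ᵥ (C⁻¹ *ᵥ y0) = y0 := by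
        rw [Matrix.mulVec_mulVec, hCC', Matrix.one_mulVec]
      refine ⟨C⁻¹ *ᵥ y0, ?_, ?_⟩
      · show A *ᵥ (C⁻¹ *ᵥ y0) + B *ᵥ (fun i => |(C *ᵥ (C⁻¹ *ᵥ y0)) i|) = fun i => F i j
        rw [← hAM, hCy0]
        exact hy0
      · intro x hx
        rw [← hAM] at hx
        have hx' : C *ᵥ x = y0 := hy0u _ hx
        have := congrArg (fun v => C⁻¹ *ᵥ v) hx'
        simpa [Matrix.mulVec_mulVec, hCC, Matrix.one_mulVec] using this
    choose g hg using fun j => (hcols j).exists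
    have hentry : ∀ (X : Matrix (Fin n) (Fin n) ℝ) (i j : Fin n),
        (A * X + B * matAbs (C * X)) i j
          = (A *ᵥ (fun k => X k j)) i + (B *ᵥ (fun k => |(C *ᵥ (fun l => X l j)) k|)) i := by
      intro X i j
      rfl
    refine ⟨Matrix.of (fun i j => g j i), ?_, ?_⟩
    · ext i j
      rw [hentry]
      have hcol : (fun k => (Matrix.of (fun i j => g j i)) k j) = g j := rfl
      rw [hcol]
      exact congrFun (hg j) i
    · intro X' hX'
      ext i j
      have hcol : A *ᵥ (fun k => X' k j) + B *ᵥ (fun k => |(C *ᵥ (fun l => X' l j)) k|)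
          = fun i => F i j := by
        funext i'
        have := congrFun (congrFun hX' i') j
        rw [hentry] at this
        exact this
      have := (hcols j).unique hcol (hg j)
      exact congrFun this i
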